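/- Let H and K be complex Hilbert spaces, let ξ, ξ' ∈ H and η, η' ∈ K be unit vectors, and let u = ξ ⊠ η and v = ξ' ⊠ η' be the associated rank-one operators from H to K. If ‖u − v‖ = √2 and ‖u + v‖ = √2 (operator norms), then Re( ⟪ξ', ξ⟫ · ⟪η, η'⟫ ) = 0 and ‖ξ' − ⟪ξ, ξ'⟫·ξ‖ · ‖η' − ⟪η, η'⟫·η‖ = 0. -/

import Mathlib

noncomputable section

/-- The rank-one operator `ξ ⊠ η : H →L[ℂ] K`, `ζ ↦ ⟪ξ, ζ⟫ • η`. -/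
def rankOne {H K : Type*} [NormedAddCommGroup H] [InnerProductSpace ℂ H]
    [NormedAddCommGroup K] [InnerProductSpace ℂ K] (ξ : H) (η : K) : H →L[ℂ] K :=
  (ContinuousLinearMap.toSpanSingleton ℂ η).comp (innerSL ℂ ξ)

open ComplexConjugate

local notation "⟪" x ", " y "⟫" => @inner ℂ _ _ x y

section Aux

variable {H K : Type*}
    [NormedAddCommGroup H] [InnerProductSpace ℂ H]
    [NormedAddCommGroup K] [InnerProductSpace ℂ K]

theorem rankOne_apply' (ξ : H) (η : K) (ζ : H) : rankOne ξ η ζ = ⟪ξ, ζ⟫ • η := rfl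

/-- Rank-one norm bound. -/
theorem key1 (T : H →L[ℂ] K) (e : H) (x : K) (he : ‖e‖ = 1)
    (hT : ∀ ζ, T ζ = ⟪e, ζ⟫ • x) : ‖T‖ ≤ ‖x‖ := by
  refine T.opNorm_le_bound (norm_nonneg x) fun ζ => ?_
  rw [hT, norm_smul]
  calc ‖(⟪e, ζ⟫ : ℂ)‖ * ‖x‖ ≤ (‖e‖ * ‖ζ‖) * ‖x‖ := by
        gcongr; exact norm_inner_le_norm _ _
    _ = ‖x‖ * ‖ζ‖ := by rw [he]; ring

set_option maxHeartbeats 1000000 in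
/-- Rank-two norm bound: the largest singular value formula as an upper bound. -/
theorem key2 (T : H →L[ℂ] K) (e₁ e₂ : H) (x y : K)
    (he₁ : ‖e₁‖ = 1) (he₂ : ‖e₂‖ = 1) (ho : ⟪e₁, e₂⟫ = 0)
    (hT : ∀ ζ, T ζ = ⟪e₁, ζ⟫ • x + ⟪e₂, ζ⟫ • y) :
    ‖T‖ ^ 2 ≤ (‖x‖^2 + ‖y‖^2)/2
      + Real.sqrt (((‖x‖^2 - ‖y‖^2)/2)^2 + ‖(⟪x, y⟫ : ℂ)‖^2) := by
  set D := (‖x‖^2 - ‖y‖^2)/2 with hD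
  set g := ‖(⟪x, y⟫ : ℂ)‖ with hg
  set R := Real.sqrt (D^2 + g^2) with hRdef
  have hR0 : 0 ≤ R := Real.sqrt_nonneg _
  have hR2 : R^2 = D^2 + g^2 := Real.sq_sqrt (by positivity)
  set M := (‖x‖^2 + ‖y‖^2)/2 + R with hM
  have hM0 : 0 ≤ M := by positivity
  have hTnorm : ‖T‖ ≤ Real.sqrt M := by
    refine T.opNorm_le_bound (Real.sqrt_nonneg _) fun ζ => ?_
    have hbessel : ‖(⟪e₁, ζ⟫ : ℂ)‖^2 + ‖(⟪e₂, ζ⟫ : ℂ)‖^2 ≤ ‖ζ‖^2 := by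
      have hortho : Orthonormal ℂ ![e₁, e₂] := by
        rw [orthonormal_iff_ite]
        intro i j
        have ho' : ⟪e₂, e₁⟫ = 0 := by rwa [inner_eq_zero_symm]
        fin_cases i <;> fin_cases j <;>
          simp [inner_self_eq_norm_sq_to_K, he₁, he₂, ho, ho']
      have := hortho.sum_inner_products_le (𝕜 := ℂ) ζ (s := Finset.univ)
      simpa [Fin.sum_univ_two] using this
    set c := ‖(⟪e₁, ζ⟫ : ℂ)‖ with hc
    set s := ‖(⟪e₂, ζ⟫ : ℂ)‖ with hs
    have hc0 : 0 ≤ c := norm_nonneg _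
    have hs0 : 0 ≤ s := norm_nonneg _
    have hTz2 : ‖T ζ‖^2 ≤ c^2*‖x‖^2 + s^2*‖y‖^2 + 2*(c*s*g) := by
      rw [hT, @norm_add_sq ℂ]
      have h1 : ‖(⟪e₁, ζ⟫ : ℂ) • x‖^2 = c^2*‖x‖^2 := by rw [norm_smul]; ring
      have h2 : ‖(⟪e₂, ζ⟫ : ℂ) • y‖^2 = s^2*‖y‖^2 := by rw [norm_smul]; ring
      have h3 : RCLike.re (⟪(⟪e₁, ζ⟫ : ℂ) • x, (⟪e₂, ζ⟫ : ℂ) • y⟫ : ℂ)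
          ≤ c*s*g := by
        rw [inner_smul_left, inner_smul_right]
        calc RCLike.re ((conj (⟪e₁, ζ⟫:ℂ)) * ((⟪e₂, ζ⟫:ℂ) * ⟪x, y⟫))
            ≤ ‖(conj (⟪e₁, ζ⟫:ℂ)) * ((⟪e₂, ζ⟫:ℂ) * ⟪x, y⟫)‖ :=
              RCLike.re_le_norm _
          _ = c*s*g := by rw [norm_mul, norm_mul, RCLike.norm_conj]; ring
      linarith
    have hmid : c^2*‖x‖^2 + s^2*‖y‖^2 + 2*(c*s*g) ≤ M*(c^2+s^2) := by
      have hcs : (c^2-s^2)*D + (2*c*s)*g ≤ (c^2+s^2)*R := by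
        set L := (c^2-s^2)*D + (2*c*s)*g with hL
        rcases le_or_gt L 0 with h | h
        · exact h.trans (by positivity)
        · have hL2 : L^2 ≤ ((c^2+s^2)*R)^2 := by
            have hre : ((c^2+s^2)*R)^2 = (c^2+s^2)^2*(D^2+g^2) := by
              rw [mul_pow, hR2]
            rw [hre, hL]
            nlinarith [sq_nonneg ((c^2-s^2)*g - 2*(c*s)*D)]
          exact le_of_pow_le_pow_left₀ two_ne_zero (by positivity) hL2
      have : c^2*‖x‖^2 + s^2*‖y‖^2
          = (c^2+s^2)*((‖x‖^2+‖y‖^2)/2) + (c^2-s^2)*D := by rw [hD]; ring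
      rw [this, hM]; nlinarith [hcs]
    have hfin : ‖T ζ‖^2 ≤ M*‖ζ‖^2 := by
      have h1 : M*(c^2+s^2) ≤ M*‖ζ‖^2 :=
        mul_le_mul_of_nonneg_left hbessel hM0
      linarith
    have := Real.sqrt_le_sqrt hfin
    rwa [Real.sqrt_sq (norm_nonneg _), Real.sqrt_mul hM0,
      Real.sqrt_sq (norm_nonneg _)] at this
  calc ‖T‖^2 ≤ (Real.sqrt M)^2 := by
        apply pow_le_pow_left₀ (norm_nonneg _) hTnorm
    _ = M := Real.sq_sqrt hM0

/-- Weaker consequence: `‖T‖² ≤ ‖x‖² + ‖y‖²` (Hilbert–Schmidt bound). -/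
theorem key2' (T : H →L[ℂ] K) (e₁ e₂ : H) (x y : K)
    (he₁ : ‖e₁‖ = 1) (he₂ : ‖e₂‖ = 1) (ho : ⟪e₁, e₂⟫ = 0)
    (hT : ∀ ζ, T ζ = ⟪e₁, ζ⟫ • x + ⟪e₂, ζ⟫ • y) :
    ‖T‖ ^ 2 ≤ ‖x‖^2 + ‖y‖^2 := by
  have h := key2 T e₁ e₂ x y he₁ he₂ ho hT
  have hg : ‖(⟪x, y⟫ : ℂ)‖^2 ≤ ‖x‖^2 * ‖y‖^2 := by
    have := norm_inner_le_norm (𝕜 := ℂ) x y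
    nlinarith [norm_nonneg (⟪x, y⟫ : ℂ), norm_nonneg x, norm_nonneg y]
  have hsq : Real.sqrt (((‖x‖^2 - ‖y‖^2)/2)^2 + ‖(⟪x, y⟫ : ℂ)‖^2)
      ≤ (‖x‖^2 + ‖y‖^2)/2 := by
    have h1 : ((‖x‖^2 - ‖y‖^2)/2)^2 + ‖(⟪x, y⟫ : ℂ)‖^2
        ≤ ((‖x‖^2 + ‖y‖^2)/2)^2 := by nlinarith
    calc Real.sqrt (((‖x‖^2 - ‖y‖^2)/2)^2 + ‖(⟪x, y⟫ : ℂ)‖^2)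
        ≤ Real.sqrt (((‖x‖^2 + ‖y‖^2)/2)^2) := Real.sqrt_le_sqrt h1
      _ = (‖x‖^2 + ‖y‖^2)/2 := Real.sqrt_sq (by positivity)
  linarith

/-- Norm of the perpendicular part. -/
theorem perp_norm_sq (u v : H) (hu : ‖u‖ = 1) (hv : ‖v‖ = 1) :
    ‖v - (⟪u, v⟫ : ℂ) • u‖^2 = 1 - ‖(⟪u, v⟫ : ℂ)‖^2 := by
  rw [@norm_sub_sq ℂ, inner_smul_right, hv, norm_smul, hu, ← inner_conj_symm v u,
    Complex.mul_conj']
  simp [Complex.normSq_eq_norm_sq, ← Complex.ofReal_pow]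
  ring

end Aux

set_option maxHeartbeats 1000000 in
/-- If two rank-one partial isometries `u`, `v` satisfy `‖u - v‖ = ‖u + v‖ = √2`, then
`Re φ_u(v) = 0` and `P₀(u)(v) = 0`. -/
theorem rankOne_dist_sqrt_two
    {H K : Type*}
    [NormedAddCommGroup H] [InnerProductSpace ℂ H] [CompleteSpace H]
    [NormedAddCommGroup K] [InnerProductSpace ℂ K] [CompleteSpace K]
    (ξ ξ' : H) (η η' : K)
    (hξ : ‖ξ‖ = 1) (hξ' : ‖ξ'‖ = 1) (hη : ‖η‖ = 1) (hη' : ‖η'‖ = 1)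
    (hsub : ‖rankOne ξ η - rankOne ξ' η'‖ = Real.sqrt 2)
    (hadd : ‖rankOne ξ η + rankOne ξ' η'‖ = Real.sqrt 2) :
    ((inner ℂ ξ' ξ : ℂ) * (inner ℂ η η' : ℂ)).re = 0 ∧
      ‖ξ' - (inner ℂ ξ ξ' : ℂ) • ξ‖ * ‖η' - (inner ℂ η η' : ℂ) • η‖ = 0 := by
  set a : ℂ := ⟪ξ, ξ'⟫ with ha
  set b : ℂ := ⟪η, η'⟫ with hb
  have haconj : (⟪ξ', ξ⟫ : ℂ) = conj a := by rw [ha, inner_conj_symm]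
  have hα2 : ‖ξ' - a • ξ‖^2 = 1 - ‖a‖^2 := perp_norm_sq ξ ξ' hξ hξ'
  have hβ2 : ‖η' - b • η‖^2 = 1 - ‖b‖^2 := perp_norm_sq η η' hη hη'
  -- auxiliary estimate used for the first conclusion
  have haux : ∀ ε : ℂ, (ε = 1 ∨ ε = -1) →
      ‖rankOne ξ η + ε • rankOne ξ' η'‖ = Real.sqrt 2 →
      0 ≤ (ε * (conj a * b)).re := by
    intro ε hε hTn
    have hεn : ‖ε‖ = 1 := by rcases hε with h | h <;> simp [h]
    set T : H →L[ℂ] K := rankOne ξ η + ε • rankOne ξ' η' with hTdef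
    have hTapp : ∀ ζ, T ζ = ⟪ξ, ζ⟫ • η + ⟪ξ', ζ⟫ • (ε • η') := by
      intro ζ
      simp only [hTdef, ContinuousLinearMap.add_apply, ContinuousLinearMap.smul_apply,
        rankOne_apply']
      congr 1
      exact smul_comm _ _ _
    have hT2 : ‖T‖^2 = 2 := by rw [hTn]; exact Real.sq_sqrt (by norm_num)
    have hA : ‖η + (conj a * ε) • η'‖^2 = 1 + ‖a‖^2 + 2*(ε * (conj a * b)).re := by
      rw [@norm_add_sq ℂ, inner_smul_right, hη, norm_smul, norm_mul, RCLike.norm_conj,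
        hεn, hη']
      have hcomm : conj a * ε * (⟪η, η'⟫ : ℂ) = ε * (conj a * b) := by rw [← hb]; ring
      rw [hcomm]
      simp only [RCLike.re_to_complex]
      ring
    by_cases hz : ξ' - a • ξ = 0
    · -- ξ' is a multiple of ξ
      have hξ'eq : ξ' = a • ξ := by rwa [sub_eq_zero] at hz
      have hna : ‖a‖^2 = 1 := by
        rw [hz, norm_zero] at hα2; nlinarith [hα2]
      have hT1 : ∀ ζ, T ζ = ⟪ξ, ζ⟫ • (η + (conj a * ε) • η') := by
        intro ζ
        rw [hTapp]
        conv_lhs => rw [hξ'eq]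
        rw [inner_smul_left]
        module
      have hnorm := key1 T ξ _ hξ hT1
      rw [hTn] at hnorm
      have h2le : 2 ≤ ‖η + (conj a * ε) • η'‖^2 := by
        calc (2:ℝ) = (Real.sqrt 2)^2 := (Real.sq_sqrt (by norm_num)).symm
          _ ≤ _ := pow_le_pow_left₀ (Real.sqrt_nonneg _) hnorm 2
      rw [hA, hna] at h2le
      linarith
    · set α := ‖ξ' - a • ξ‖ with hαdef
      have hα0 : 0 < α := norm_pos_iff.mpr hz
      have hne : (α:ℂ) ≠ 0 := by exact_mod_cast hα0.ne'
      set e₂ : H := ((α:ℂ))⁻¹ • (ξ' - a • ξ) with he₂def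
      have he₂ : ‖e₂‖ = 1 := by
        rw [he₂def, norm_smul, norm_inv, Complex.norm_real, Real.norm_eq_abs,
          abs_of_pos hα0, ← hαdef]
        field_simp
      have hinner : (⟪ξ, e₂⟫ : ℂ) = 0 := by
        rw [he₂def, inner_smul_right, inner_sub_right, inner_smul_right,
          inner_self_eq_norm_sq_to_K, hξ, ← ha]
        simp
      have hsum : a • ξ + (α:ℂ) • e₂ = ξ' := by
        rw [he₂def, smul_smul, mul_inv_cancel₀ hne, one_smul]
        abel
      have hdec : ∀ ζ : H, (⟪ξ', ζ⟫ : ℂ) = conj a * ⟪ξ, ζ⟫ + (α:ℂ) * ⟪e₂, ζ⟫ := by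
        intro ζ
        conv_lhs => rw [← hsum]
        rw [inner_add_left, inner_smul_left, inner_smul_left, Complex.conj_ofReal]
      have hT1 : ∀ ζ, T ζ = ⟪ξ, ζ⟫ • (η + (conj a * ε) • η')
          + ⟪e₂, ζ⟫ • (((α:ℂ) * ε) • η') := by
        intro ζ
        rw [hTapp, hdec]
        module
      have hB : ‖((α:ℂ) * ε) • η'‖^2 = α^2 := by
        rw [norm_smul, norm_mul, hεn, hη', Complex.norm_real, Real.norm_eq_abs]
        rw [abs_of_pos hα0]; ring
      have hkey := key2' T ξ e₂ _ _ hξ he₂ hinner hT1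
      rw [hT2, hA, hB, hα2] at hkey
      linarith
  -- first conclusion
  have hneg : ‖rankOne ξ η + (-1 : ℂ) • rankOne ξ' η'‖ = Real.sqrt 2 := by
    rw [neg_one_smul, ← sub_eq_add_neg]; exact hsub
  have hpos : ‖rankOne ξ η + (1 : ℂ) • rankOne ξ' η'‖ = Real.sqrt 2 := by
    rw [one_smul]; exact hadd
  have h1 := haux 1 (Or.inl rfl) hpos
  have h2 := haux (-1) (Or.inr rfl) hneg
  rw [one_mul] at h1
  rw [neg_one_mul, Complex.neg_re] at h2
  have hre : (conj a * b).re = 0 := le_antisymm (by linarith) h1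
  refine ⟨by rw [haconj]; exact hre, ?_⟩
  -- second conclusion
  by_cases hz : ξ' - a • ξ = 0
  · rw [hz, norm_zero, zero_mul]
  · set α := ‖ξ' - a • ξ‖ with hαdef
    have hα0 : 0 < α := norm_pos_iff.mpr hz
    have hne : (α:ℂ) ≠ 0 := by exact_mod_cast hα0.ne'
    set e₂ : H := ((α:ℂ))⁻¹ • (ξ' - a • ξ) with he₂def
    have he₂ : ‖e₂‖ = 1 := by
      rw [he₂def, norm_smul, norm_inv, Complex.norm_real, Real.norm_eq_abs,
        abs_of_pos hα0, ← hαdef]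
      field_simp
    have hinner : (⟪ξ, e₂⟫ : ℂ) = 0 := by
      rw [he₂def, inner_smul_right, inner_sub_right, inner_smul_right,
        inner_self_eq_norm_sq_to_K, hξ, ← ha]
      simp
    have hsum : a • ξ + (α:ℂ) • e₂ = ξ' := by
      rw [he₂def, smul_smul, mul_inv_cancel₀ hne, one_smul]
      abel
    have hdec : ∀ ζ : H, (⟪ξ', ζ⟫ : ℂ) = conj a * ⟪ξ, ζ⟫ + (α:ℂ) * ⟪e₂, ζ⟫ := by
      intro ζ
      conv_lhs => rw [← hsum]
      rw [inner_add_left, inner_smul_left, inner_smul_left, Complex.conj_ofReal]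
    set T : H →L[ℂ] K := rankOne ξ η + rankOne ξ' η' with hTdef
    have hT1 : ∀ ζ, T ζ = ⟪ξ, ζ⟫ • (η + conj a • η') + ⟪e₂, ζ⟫ • ((α:ℂ) • η') := by
      intro ζ
      simp only [hTdef, ContinuousLinearMap.add_apply, rankOne_apply']
      rw [hdec]
      module
    have hT2 : ‖T‖^2 = 2 := by rw [hTdef, hadd]; exact Real.sq_sqrt (by norm_num)
    have hA2 : ‖η + conj a • η'‖^2 = 1 + ‖a‖^2 := by
      rw [@norm_add_sq ℂ, inner_smul_right, hη, norm_smul, RCLike.norm_conj, hη']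
      have hcomm : conj a * (⟪η, η'⟫ : ℂ) = conj a * b := by rw [← hb]
      rw [hcomm]
      simp only [RCLike.re_to_complex, hre]
      ring
    have hB2 : ‖(α:ℂ) • η'‖^2 = α^2 := by
      rw [norm_smul, hη', Complex.norm_real, Real.norm_eq_abs, abs_of_pos hα0]; ring
    have hg2 : ‖(⟪η + conj a • η', (α:ℂ) • η'⟫ : ℂ)‖^2 = α^2 * (‖a‖^2 + ‖b‖^2) := by
      have hip : (⟪η + conj a • η', (α:ℂ) • η'⟫ : ℂ) = (α:ℂ) * (b + a) := by
        rw [inner_add_left, inner_smul_right, inner_smul_right, inner_smul_left,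
          inner_self_eq_norm_sq_to_K, hη', ← hb, Complex.conj_conj]
        push_cast
        ring
      rw [hip, norm_mul, Complex.norm_real, Real.norm_eq_abs, abs_of_pos hα0, mul_pow]
      congr 1
      have hba : ‖b + a‖^2 = ‖b‖^2 + 2*(conj b * a).re + ‖a‖^2 := by
        rw [@norm_add_sq ℂ ℂ, RCLike.inner_apply]
        simp only [RCLike.re_to_complex]
        try ring
      have hconjre : (conj b * a).re = 0 := by
        have h' : conj b * a = conj (conj a * b) := by
          rw [map_mul, Complex.conj_conj]; ring
        rw [h', Complex.conj_re, hre]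
      rw [hba, hconjre]; ring
    have hkey := key2 T ξ e₂ _ _ hξ he₂ hinner hT1
    rw [hT2, hA2, hB2, hg2] at hkey
    have hhalf : (1 + ‖a‖^2 + α^2)/2 = 1 := by rw [hα2]; ring
    have harg : ((1 + ‖a‖^2 - α^2)/2)^2 + α^2*(‖a‖^2 + ‖b‖^2)
        = ‖a‖^2 + α^2*‖b‖^2 := by rw [hα2]; ring
    rw [hhalf, harg] at hkey
    have hs0 : (0:ℝ) ≤ ‖a‖^2 + α^2*‖b‖^2 := by positivity
    have h1s : (1:ℝ) ≤ Real.sqrt (‖a‖^2 + α^2*‖b‖^2) := by linarith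
    have hsq : 1 ≤ ‖a‖^2 + α^2*‖b‖^2 := by
      calc (1:ℝ) = 1*1 := by ring
        _ ≤ Real.sqrt (‖a‖^2 + α^2*‖b‖^2) * Real.sqrt (‖a‖^2 + α^2*‖b‖^2) :=
            mul_le_mul h1s h1s (by norm_num) (Real.sqrt_nonneg _)
        _ = ‖a‖^2 + α^2*‖b‖^2 := Real.mul_self_sqrt hs0
    have hb1 : 1 ≤ ‖b‖^2 := by nlinarith [hα2, pow_pos hα0 2, hsq]
    have hβ0 : ‖η' - b • η‖ = 0 := by
      have h0 : ‖η' - b • η‖^2 ≤ 0 := by rw [hβ2]; linarith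
      have h0' : ‖η' - b • η‖ ≤ 0 := by
        nlinarith [norm_nonneg (η' - b • η)]
      exact le_antisymm h0' (norm_nonneg _)
    rw [hβ0, mul_zero]
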